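/- For s > 0 and a > 0, ∫₀^∞ e^(−s t) · t · e^(−a t²) dt = (s / (4√π · a^(3/2))) · ∫₀^∞ e^(−s²/(4 u a)) · u^(−3/2) · (1/(u+1)) du, as an instance of the implicit square formula with F(t) = e^(−t) whose Laplace transform is f(u) = 1/(u+1). -/

import Mathlib

open MeasureTheory Real Set

-- strict monotonicity of t - c/t on Ioi 0
lemma gmono {c : ℝ} (hc : 0 < c) : StrictMonoOn (fun t : ℝ => t - c / t) (Ioi (0:ℝ)) := by
  intro x hx y hy hxy
  have h1 : c / y < c / x := div_lt_div_of_pos_left hc hx hxy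
  simp only
  linarith

lemma gsurj {c : ℝ} (hc : 0 < c) : (fun t : ℝ => t - c / t) '' (Ioi (0:ℝ)) = univ := by
  apply eq_univ_of_forall
  intro y
  set t0 : ℝ := (y + Real.sqrt (y ^ 2 + 4 * c)) / 2 with ht0
  have hsq : Real.sqrt (y ^ 2 + 4 * c) ^ 2 = y ^ 2 + 4 * c := by
    rw [sq_sqrt]; nlinarith
  have hgt : -y < Real.sqrt (y ^ 2 + 4 * c) := by
    nlinarith [Real.sqrt_nonneg (y ^ 2 + 4 * c), hsq]
  have ht0pos : 0 < t0 := by rw [ht0]; linarith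
  refine ⟨t0, ht0pos, ?_⟩
  have key : t0 * t0 = y * t0 + c := by
    rw [ht0]; nlinarith [hsq]
  show t0 - c / t0 = y
  field_simp
  nlinarith [key]

lemma gderiv {c : ℝ} (t : ℝ) (ht : t ∈ Ioi (0:ℝ)) :
    HasDerivWithinAt (fun t : ℝ => t - c / t) (1 + c / t ^ 2) (Ioi (0:ℝ)) t := by
  have ht' : (t:ℝ) ≠ 0 := ne_of_gt ht
  have h : HasDerivAt (fun t : ℝ => t - c / t) (1 + c / t ^ 2) t := by
    have h1 : HasDerivAt (fun t : ℝ => c / t) (c * (-(t ^ 2)⁻¹)) t := by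
      simpa [div_eq_mul_inv] using (hasDerivAt_inv ht').const_mul c
    have := (hasDerivAt_id t).sub h1
    exact this.congr_deriv (by ring)
  exact h.hasDerivWithinAt

lemma glasser {b c : ℝ} (hb : 0 < b) (hc : 0 < c) :
    ∫ t in Ioi (0:ℝ), Real.exp (-b * (t - c / t) ^ 2) = Real.sqrt (π / b) / 2 := by
  set g : ℝ → ℝ := fun t => t - c / t with hg
  set f : ℝ → ℝ := fun t => Real.exp (-b * (g t) ^ 2) with hf
  have hinj : InjOn g (Ioi (0:ℝ)) := (gmono hc).injOn
  -- change of variables: ∫_ℝ exp(-b y²) = ∫_{Ioi 0} (1 + c/t²) f t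
  have key : ∫ y : ℝ, Real.exp (-b * y ^ 2)
      = ∫ t in Ioi (0:ℝ), (1 + c / t ^ 2) * f t := by
    rw [← setIntegral_univ, ← gsurj hc,
      integral_image_eq_integral_abs_deriv_smul measurableSet_Ioi (gderiv (c := c)) hinj]
    refine setIntegral_congr_fun measurableSet_Ioi fun t ht => ?_
    have ht0 : (0:ℝ) < t := ht
    have : |1 + c / t ^ 2| = 1 + c / t ^ 2 := by
      rw [abs_of_pos]; positivity
    rw [this]; simp [hf, hg, smul_eq_mul]
  -- integrability of (1 + c/t²) f on Ioi 0
  have hInt1 : IntegrableOn (fun t => (1 + c / t ^ 2) * f t) (Ioi (0:ℝ)) := by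
    have := (integrableOn_image_iff_integrableOn_abs_deriv_smul measurableSet_Ioi
      (gderiv (c := c)) hinj (fun y => Real.exp (-b * y ^ 2))).mp ?_
    · apply this.congr_fun ?_ measurableSet_Ioi
      intro t ht
      have ht0 : (0:ℝ) < t := ht
      have : |1 + c / t ^ 2| = 1 + c / t ^ 2 := by rw [abs_of_pos]; positivity
      simp [this, hf, hg, smul_eq_mul]
    · rw [gsurj hc]
      exact (integrable_exp_neg_mul_sq hb).integrableOn
  have hfmeas : AEStronglyMeasurable f (volume.restrict (Ioi (0:ℝ))) := by
    apply ContinuousOn.aestronglyMeasurable ?_ measurableSet_Ioi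
    apply Continuous.comp_continuousOn Real.continuous_exp
    apply ContinuousOn.mul continuousOn_const
    apply ContinuousOn.pow
    exact continuousOn_id.sub (continuousOn_const.div continuousOn_id fun t ht => ne_of_gt ht)
  have hfpos : ∀ t ∈ Ioi (0:ℝ), 0 ≤ f t := fun t _ => (Real.exp_pos _).le
  have hIntf : IntegrableOn f (Ioi (0:ℝ)) := by
    apply hInt1.mono' hfmeas
    filter_upwards [self_mem_ae_restrict measurableSet_Ioi] with t ht
    have ht0 : (0:ℝ) < t := ht
    rw [Real.norm_eq_abs, abs_of_pos (Real.exp_pos _)]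
    nlinarith [(Real.exp_pos (-b * (g t)^2)).le, div_pos hc (pow_pos ht0 2)]
  have hIntcf : IntegrableOn (fun t => (c / t ^ 2) * f t) (Ioi (0:ℝ)) := by
    have : (fun t => (c / t ^ 2) * f t) = fun t => (1 + c / t ^ 2) * f t - f t := by
      ext t; ring
    rw [this]; exact hInt1.sub hIntf
  -- second change of variables: t ↦ c / t maps Ioi 0 to Ioi 0
  have himg : (fun t : ℝ => c / t) '' (Ioi (0:ℝ)) = Ioi (0:ℝ) := by
    ext y; constructor
    · rintro ⟨t, ht, rfl⟩; exact div_pos hc ht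
    · intro hy; exact ⟨c / y, div_pos hc hy, by field_simp⟩
  have hinv : ∫ t in Ioi (0:ℝ), f t = ∫ t in Ioi (0:ℝ), (c / t ^ 2) * f t := by
    conv_lhs => rw [← himg]
    rw [integral_image_eq_integral_abs_deriv_smul measurableSet_Ioi
      (f' := fun t => -(c / t ^ 2)) ?_ ?_]
    · refine setIntegral_congr_fun measurableSet_Ioi fun t ht => ?_
      have ht0 : (0:ℝ) < t := ht
      have habs : |(-(c / t ^ 2))| = c / t ^ 2 := by
        rw [abs_neg, abs_of_pos]; positivity
      rw [habs, smul_eq_mul]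
      congr 1
      simp only [hf, hg]
      congr 1
      have : c / (c / t) = t := by field_simp
      rw [this]
      ring
    · intro t ht
      have ht' : (t:ℝ) ≠ 0 := ne_of_gt (show (0:ℝ) < t from ht)
      have h1 : HasDerivAt (fun t : ℝ => c / t) (c * (-(t ^ 2)⁻¹)) t := by
        simpa [div_eq_mul_inv] using (hasDerivAt_inv ht').const_mul c
      have : c * (-(t ^ 2)⁻¹) = -(c / t ^ 2) := by field_simp
      exact (this ▸ h1).hasDerivWithinAt
    · intro x hx y hy hxy
      have hx0 : (0:ℝ) < x := hx
      have hy0 : (0:ℝ) < y := hy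
      simp only at hxy
      have hx2 : x = c / (c / x) := by field_simp
      rw [hx2, hxy]
      field_simp
  have hsplit : ∫ t in Ioi (0:ℝ), (1 + c / t ^ 2) * f t
      = (∫ t in Ioi (0:ℝ), f t) + ∫ t in Ioi (0:ℝ), (c / t ^ 2) * f t := by
    rw [← integral_add hIntf hIntcf]
    exact setIntegral_congr_fun measurableSet_Ioi fun t ht => by ring
  have hgauss : ∫ y : ℝ, Real.exp (-b * y ^ 2) = Real.sqrt (π / b) := integral_gaussian b
  have h2 : Real.sqrt (π / b) = 2 * ∫ t in Ioi (0:ℝ), f t := by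
    rw [← hgauss, key, hsplit, ← hinv]; ring
  show ∫ t in Ioi (0:ℝ), f t = _
  linarith

lemma sq_img : (fun t : ℝ => t ^ 2) '' (Ioi (0:ℝ)) = Ioi (0:ℝ) := by
  ext y; constructor
  · rintro ⟨t, ht, rfl⟩; exact pow_pos (show (0:ℝ) < t from ht) 2
  · intro hy
    exact ⟨Real.sqrt y, Real.sqrt_pos.mpr hy, Real.sq_sqrt (le_of_lt hy)⟩

lemma sq_injOn : InjOn (fun t : ℝ => t ^ 2) (Ioi (0:ℝ)) := by
  intro x hx y hy h
  have hx0 : (0:ℝ) < x := hx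
  have hy0 : (0:ℝ) < y := hy
  simp only at h
  nlinarith [sq_nonneg (x - y), sq_nonneg (x + y)]

lemma sq_deriv (t : ℝ) (ht : t ∈ Ioi (0:ℝ)) :
    HasDerivWithinAt (fun t : ℝ => t ^ 2) (2 * t) (Ioi (0:ℝ)) t := by
  simpa using (hasDerivAt_pow 2 t).hasDerivWithinAt

lemma lem2 {A B : ℝ} (hA : 0 < A) (hB : 0 < B) :
    ∫ u in Ioi (0:ℝ), u ^ (-(1:ℝ)/2) * Real.exp (-(A/u) - B*u)
      = Real.sqrt (π / B) * Real.exp (-(2 * Real.sqrt (A*B))) := by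
  set c : ℝ := Real.sqrt A / Real.sqrt B with hcdef
  have hc : 0 < c := div_pos (Real.sqrt_pos.mpr hA) (Real.sqrt_pos.mpr hB)
  have hc2 : c ^ 2 = A / B := by
    rw [hcdef, div_pow, Real.sq_sqrt hA.le, Real.sq_sqrt hB.le]
  have hBc : B * c = Real.sqrt (A * B) := by
    rw [hcdef, Real.sqrt_mul hA.le, mul_comm (Real.sqrt A), ← mul_div_assoc,
      mul_comm B, mul_div_assoc, Real.div_sqrt]
    ring
  rw [← sq_img, integral_image_eq_integral_abs_deriv_smul measurableSet_Ioi sq_deriv sq_injOn]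
  have hcongr : ∀ t ∈ Ioi (0:ℝ),
      |2 * t| • ((t ^ 2) ^ (-(1:ℝ)/2) * Real.exp (-(A/t^2) - B*t^2))
        = (2 * Real.exp (-(2 * Real.sqrt (A*B)))) * Real.exp (-B * (t - c/t)^2) := by
    intro t ht
    have ht0 : (0:ℝ) < t := ht
    have h1 : (t ^ 2 : ℝ) ^ (-(1:ℝ)/2) = t⁻¹ := by
      rw [← Real.rpow_natCast t 2, ← Real.rpow_mul ht0.le]
      norm_num
      exact (Real.rpow_neg_one t).trans rfl
    have h2 : -(A/t^2) - B*t^2 = -B * (t - c/t)^2 + (-(2 * Real.sqrt (A*B))) := by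
      have expand : -B * (t - c/t)^2 = -B*t^2 + 2*(B*c) - (B * c^2)/t^2 := by
        field_simp; ring
      rw [expand, hBc, hc2]
      have : B * (A / B) = A := by field_simp
      rw [this]
      ring
    rw [h1, h2, Real.exp_add, abs_of_pos (by positivity), smul_eq_mul]
    field_simp
  rw [setIntegral_congr_fun measurableSet_Ioi hcongr, integral_const_mul, glasser hB hc]
  ring

lemma inv_img : (fun w : ℝ => w⁻¹) '' (Ioi (0:ℝ)) = Ioi (0:ℝ) := by
  ext y; constructor
  · rintro ⟨t, ht, rfl⟩; exact inv_pos.mpr (show (0:ℝ) < t from ht)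
  · intro hy; exact ⟨y⁻¹, show (0:ℝ) < y⁻¹ from inv_pos.mpr hy, inv_inv y⟩

lemma lem3 {A B : ℝ} (hA : 0 < A) (hB : 0 < B) :
    ∫ u in Ioi (0:ℝ), u ^ (-(3:ℝ)/2) * Real.exp (-(A/u) - B*u)
      = Real.sqrt (π / A) * Real.exp (-(2 * Real.sqrt (A*B))) := by
  rw [← inv_img, integral_image_eq_integral_abs_deriv_smul measurableSet_Ioi
    (f' := fun w => -(w^2)⁻¹) ?_ ?_]
  · have hcongr : ∀ w ∈ Ioi (0:ℝ),
        |(-(w^2)⁻¹)| • ((w⁻¹) ^ (-(3:ℝ)/2) * Real.exp (-(A/w⁻¹) - B*w⁻¹))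
          = w ^ (-(1:ℝ)/2) * Real.exp (-(B/w) - A*w) := by
      intro w hw
      have hw0 : (0:ℝ) < w := hw
      have h1 : (w⁻¹ : ℝ) ^ (-(3:ℝ)/2) = w ^ ((3:ℝ)/2) := by
        rw [← Real.rpow_neg_one w, ← Real.rpow_mul hw0.le]
        norm_num
      have h2 : |(-(w^2)⁻¹)| = w ^ (-(2:ℝ)) := by
        rw [abs_neg, abs_of_pos (by positivity), ← Real.rpow_natCast w 2,
          ← Real.rpow_neg hw0.le]
        norm_num
      have h3 : -(A/w⁻¹) - B*w⁻¹ = -(B/w) - A*w := by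
        field_simp; ring
      rw [h1, h2, h3, smul_eq_mul, ← mul_assoc, ← Real.rpow_add hw0]
      norm_num
    rw [setIntegral_congr_fun measurableSet_Ioi hcongr, lem2 hB hA, mul_comm B A]
  · intro w hw
    have hw0 : (0:ℝ) < w := hw
    exact (hasDerivAt_inv hw0.ne').hasDerivWithinAt
  · intro x hx y hy h
    simp only at h
    exact inv_injective h

theorem stmt_18 (a s : ℝ) (ha : 0 < a) (hs : 0 < s) :
    ∫ t in Set.Ioi (0:ℝ), Real.exp (-s * t) * t * Real.exp (-a * t ^ 2)
      = (s / (4 * Real.sqrt π * a ^ ((3:ℝ)/2))) *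
        ∫ u in Set.Ioi (0:ℝ), Real.exp (-s ^ 2 / (4 * u * a)) * u ^ (-(3:ℝ)/2)
          * (1 / (u + 1)) := by
  set A : ℝ := s ^ 2 / (4 * a) with hAdef
  have hA : 0 < A := by positivity
  set G : ℝ → ℝ := fun u => Real.exp (-(A/u)) * u ^ (-(3:ℝ)/2) with hGdef
  set f : ℝ → ℝ → ℝ := fun u z => G u * Real.exp (-((u+1)*z)) with hfdef
  set L : ℝ := ∫ t in Set.Ioi (0:ℝ), Real.exp (-s * t) * t * Real.exp (-a * t ^ 2) with hL
  -- inner z integral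
  have hexpint : ∀ u : ℝ, 0 < u → (∫ z in Ioi (0:ℝ), Real.exp (-((u+1) * z))) = 1 / (u+1) := by
    intro u hu
    have h1 : (0:ℝ) < u + 1 := by linarith
    have h2 := integral_comp_mul_left_Ioi (fun z => Real.exp (-z)) 0 h1
    simp only [mul_zero, smul_eq_mul, integral_exp_neg_Ioi_zero] at h2
    rw [h2]; rw [one_div]; ring
  -- G positivity
  have hGpos : ∀ u : ℝ, 0 < u → 0 < G u := by
    intro u hu
    exact mul_pos (Real.exp_pos _) (Real.rpow_pos_of_pos hu _)
  -- integrability of G on Ioi 0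
  have hGcont : ContinuousOn G (Ioi (0:ℝ)) := by
    apply ContinuousOn.mul
    · exact Real.continuous_exp.comp_continuousOn
        ((continuousOn_const.div continuousOn_id fun x hx => ne_of_gt hx).neg)
    · exact ContinuousOn.rpow_const continuousOn_id fun x hx => Or.inl (ne_of_gt hx)
  have hGmeas : AEStronglyMeasurable G (volume.restrict (Ioi (0:ℝ))) :=
    hGcont.aestronglyMeasurable measurableSet_Ioi
  have hGint : IntegrableOn G (Ioi (0:ℝ)) := by
    rw [← Ioc_union_Ioi_eq_Ioi (zero_le_one : (0:ℝ) ≤ 1)]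
    apply IntegrableOn.union
    · -- bounded by 4/A² on Ioc 0 1
      apply Integrable.mono' (g := fun _ => 4/A^2)
        (integrableOn_const measure_Ioc_lt_top.ne)
        (hGmeas.mono_measure (Measure.restrict_mono Ioc_subset_Ioi_self le_rfl))
      filter_upwards [self_mem_ae_restrict measurableSet_Ioc] with u hu
      obtain ⟨hu0, hu1⟩ := hu
      rw [Real.norm_eq_abs, abs_of_pos (hGpos u hu0)]
      have e1 : Real.exp (-(A/u)) ≤ 4*u^2/A^2 := by
        have key := Real.add_one_le_exp (A/(2*u))
        have hpos : (0:ℝ) < A/(2*u) := by positivity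
        have hsplit : Real.exp (A/u) = Real.exp (A/(2*u)) * Real.exp (A/(2*u)) := by
          rw [← Real.exp_add]; congr 1; field_simp; ring
        have hlow : A^2/(4*u^2) ≤ Real.exp (A/u) := by
          rw [hsplit]
          have : A^2/(4*u^2) = (A/(2*u))*(A/(2*u)) := by field_simp; ring
          rw [this]
          nlinarith [Real.exp_pos (A/(2*u))]
        rw [Real.exp_neg]
        have hlp : (0:ℝ) < A^2/(4*u^2) := by positivity
        calc (Real.exp (A/u))⁻¹ ≤ (A^2/(4*u^2))⁻¹ := by
              gcongr
          _ = 4*u^2/A^2 := by field_simp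
      have e2 : u^2 * u ^ (-(3:ℝ)/2) ≤ 1 := by
        have : u^2 * u ^ (-(3:ℝ)/2) = u ^ ((1:ℝ)/2) := by
          rw [← Real.rpow_natCast u 2, ← Real.rpow_add hu0]; norm_num
        rw [this]
        exact Real.rpow_le_one hu0.le hu1 (by norm_num)
      have hrp : (0:ℝ) < u ^ (-(3:ℝ)/2) := Real.rpow_pos_of_pos hu0 _
      calc G u ≤ (4*u^2/A^2) * u ^ (-(3:ℝ)/2) := by
            exact mul_le_mul_of_nonneg_right e1 hrp.le
        _ = (4/A^2) * (u^2 * u ^ (-(3:ℝ)/2)) := by ring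
        _ ≤ (4/A^2) * 1 := by
            apply mul_le_mul_of_nonneg_left e2 (by positivity)
        _ = 4/A^2 := by ring
    · -- bounded by u^{-3/2} on Ioi 1
      apply Integrable.mono' (integrableOn_Ioi_rpow_of_lt (by norm_num : (-(3:ℝ)/2) < -1) one_pos)
        (hGmeas.mono_measure (Measure.restrict_mono (Ioi_subset_Ioi zero_le_one) le_rfl))
      filter_upwards [self_mem_ae_restrict measurableSet_Ioi] with u hu
      have hu0 : (0:ℝ) < u := lt_trans one_pos hu
      rw [Real.norm_eq_abs, abs_of_pos (hGpos u hu0)]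
      have : Real.exp (-(A/u)) ≤ 1 := Real.exp_le_one_iff.mpr (by positivity |> neg_nonpos_of_nonneg)
      calc G u ≤ 1 * u ^ (-(3:ℝ)/2) :=
            mul_le_mul_of_nonneg_right this (Real.rpow_pos_of_pos hu0 _).le
        _ = u ^ (-(3:ℝ)/2) := one_mul _
  -- Fubini
  have hmeas : AEStronglyMeasurable (Function.uncurry f)
      ((volume.restrict (Ioi (0:ℝ))).prod (volume.restrict (Ioi (0:ℝ)))) := by
    rw [Measure.prod_restrict]
    apply ContinuousOn.aestronglyMeasurable ?_ (measurableSet_Ioi.prod measurableSet_Ioi)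
    apply ContinuousOn.mul
    · exact hGcont.comp continuous_fst.continuousOn (fun p hp => hp.1)
    · exact Real.continuous_exp.comp_continuousOn
        ((((continuous_fst.continuousOn.add continuousOn_const)).mul
          continuous_snd.continuousOn).neg)
  have hfint : Integrable (Function.uncurry f)
      ((volume.restrict (Ioi (0:ℝ))).prod (volume.restrict (Ioi (0:ℝ)))) := by
    rw [integrable_prod_iff hmeas]
    constructor
    · filter_upwards [self_mem_ae_restrict measurableSet_Ioi] with u hu
      have h1 : (0:ℝ) < u + 1 := by linarith [show (0:ℝ) < u from hu]
      have : IntegrableOn (fun z => Real.exp (-(u+1) * z)) (Ioi (0:ℝ)) :=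
        exp_neg_integrableOn_Ioi 0 h1
      exact (this.congr_fun (fun z _ => by rw [neg_mul]) measurableSet_Ioi).const_mul (G u)
    · have hm2 : AEStronglyMeasurable (fun u => G u * (1/(u+1)))
          (volume.restrict (Ioi (0:ℝ))) := by
        apply hGmeas.mul
        exact (measurable_const.div ((measurable_id.add_const 1))).aestronglyMeasurable
      apply Integrable.congr (f := fun u => G u * (1/(u+1)))
      · apply hGint.mono' hm2
        filter_upwards [self_mem_ae_restrict measurableSet_Ioi] with u hu
        have hu0 : (0:ℝ) < u := hu
        rw [Real.norm_eq_abs, abs_of_pos (by positivity : (0:ℝ) < G u * (1/(u+1)))]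
        calc G u * (1/(u+1)) ≤ G u * 1 :=
              mul_le_mul_of_nonneg_left
                ((div_le_one (by linarith)).mpr (by linarith)) (hGpos u hu0).le
          _ = G u := mul_one _
      · filter_upwards [self_mem_ae_restrict measurableSet_Ioi] with u hu
        have hu0 : (0:ℝ) < u := hu
        have hz : (fun z => ‖Function.uncurry f (u, z)‖)
            = fun z => G u * Real.exp (-((u+1)*z)) := by
          funext z
          rw [Function.uncurry]
          rw [Real.norm_eq_abs, abs_of_nonneg (mul_nonneg (hGpos u hu0).le (Real.exp_pos _).le)]
        show G u * (1/(u+1)) = _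
        rw [hz, integral_const_mul, hexpint u hu0]
  -- rewrite RHS integral as double integral
  have hR1 : (∫ u in Ioi (0:ℝ), Real.exp (-s ^ 2 / (4 * u * a)) * u ^ (-(3:ℝ)/2) * (1 / (u + 1)))
      = ∫ u in Ioi (0:ℝ), ∫ z in Ioi (0:ℝ), f u z := by
    refine setIntegral_congr_fun measurableSet_Ioi fun u hu => ?_
    have hu0 : (0:ℝ) < u := hu
    rw [show (fun z => f u z) = fun z => G u * Real.exp (-((u+1)*z)) from rfl,
      integral_const_mul, hexpint u hu0]
    have harg : -s ^ 2 / (4 * u * a) = -(A/u) := by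
      rw [hAdef]; field_simp
    rw [harg]
  have hswap : (∫ u in Ioi (0:ℝ), ∫ z in Ioi (0:ℝ), f u z)
      = ∫ z in Ioi (0:ℝ), ∫ u in Ioi (0:ℝ), f u z := integral_integral_swap hfint
  -- inner u-integral via lem3
  have hinner : ∀ z : ℝ, 0 < z → (∫ u in Ioi (0:ℝ), f u z)
      = Real.exp (-z) * (Real.sqrt (π / A) * Real.exp (-(2 * Real.sqrt (A*z)))) := by
    intro z hz
    rw [← lem3 hA hz, ← integral_const_mul]
    refine setIntegral_congr_fun measurableSet_Ioi fun u hu => ?_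
    show G u * Real.exp (-((u+1)*z)) = _
    simp only [hGdef]
    have l1 : Real.exp (-(A/u)) * Real.exp (-((u+1)*z))
        = Real.exp (-(A/u) - z*u) * Real.exp (-z) := by
      rw [← Real.exp_add, ← Real.exp_add]; congr 1; ring
    calc Real.exp (-(A/u)) * u ^ (-(3:ℝ)/2) * Real.exp (-((u+1)*z))
        = (Real.exp (-(A/u)) * Real.exp (-((u+1)*z))) * u ^ (-(3:ℝ)/2) := by ring
      _ = (Real.exp (-(A/u) - z*u) * Real.exp (-z)) * u ^ (-(3:ℝ)/2) := by rw [l1]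
      _ = Real.exp (-z) * (u ^ (-(3:ℝ)/2) * Real.exp (-(A/u) - z*u)) := by ring
  have hR2 : (∫ z in Ioi (0:ℝ), ∫ u in Ioi (0:ℝ), f u z)
      = Real.sqrt (π / A)
        * ∫ z in Ioi (0:ℝ), Real.exp (-z) * Real.exp (-(2 * Real.sqrt (A*z))) := by
    rw [← integral_const_mul]
    refine setIntegral_congr_fun measurableSet_Ioi fun z hz => ?_
    rw [hinner z hz]; ring
  -- substitution z = a t²
  have hsub : (∫ z in Ioi (0:ℝ), Real.exp (-z) * Real.exp (-(2 * Real.sqrt (A*z))))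
      = (2*a) * L := by
    have himg : (fun t : ℝ => a * t ^ 2) '' (Ioi (0:ℝ)) = Ioi (0:ℝ) := by
      ext y; constructor
      · rintro ⟨t, ht, rfl⟩; exact mul_pos ha (pow_pos ht 2)
      · intro hy
        refine ⟨Real.sqrt (y / a), Real.sqrt_pos.mpr (div_pos hy ha), ?_⟩
        simp only
        rw [Real.sq_sqrt (div_pos hy ha).le]; field_simp
    rw [← himg, integral_image_eq_integral_abs_deriv_smul measurableSet_Ioi
      (f' := fun t => 2*a*t) ?_ ?_]
    · rw [hL, ← integral_const_mul]
      refine setIntegral_congr_fun measurableSet_Ioi fun t ht => ?_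
      have ht0 : (0:ℝ) < t := ht
      have h1 : Real.sqrt (A * (a * t^2)) = s/2 * t := by
        rw [show A * (a * t^2) = (s/2*t)^2 from by rw [hAdef]; field_simp; ring,
          Real.sqrt_sq (by positivity)]
      rw [abs_of_pos (by positivity), smul_eq_mul, h1,
        show -(2 * (s/2*t)) = -s * t from by ring]
      ring
    · intro t ht
      have : HasDerivAt (fun t : ℝ => a * t^2) (2*a*t) t := by
        have := (hasDerivAt_pow 2 t).const_mul a
        exact this.congr_deriv (by push_cast; ring)
      exact this.hasDerivWithinAt
    · intro x hx y hy h
      have hx0 : (0:ℝ) < x := hx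
      have hy0 : (0:ℝ) < y := hy
      simp only at h
      have h2 : x^2 = y^2 := by
        have := mul_left_cancel₀ ha.ne' h; exact this
      nlinarith [sq_nonneg (x - y), sq_nonneg (x + y)]
  -- final algebra
  have h4a : Real.sqrt A = s / (2 * Real.sqrt a) := by
    rw [hAdef, show s^2/(4*a) = (s/(2*Real.sqrt a))^2 from by
      rw [div_pow, mul_pow, Real.sq_sqrt ha.le]; norm_num,
      Real.sqrt_sq (by positivity)]
  have h32 : a ^ ((3:ℝ)/2) = a * Real.sqrt a := by
    rw [show (3:ℝ)/2 = 1 + 1/2 by norm_num, Real.rpow_add ha, Real.rpow_one,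
      ← Real.sqrt_eq_rpow]
  have hπ : (0:ℝ) < Real.sqrt π := Real.sqrt_pos.mpr Real.pi_pos
  have hsa : (0:ℝ) < Real.sqrt a := Real.sqrt_pos.mpr ha
  have hone : (s / (4 * Real.sqrt π * a ^ ((3:ℝ)/2))) * (Real.sqrt (π / A) * (2*a)) = 1 := by
    rw [h32, Real.sqrt_div Real.pi_pos.le, h4a]
    field_simp
    ring
  rw [hR1, hswap, hR2, hsub,
    show (s / (4 * Real.sqrt π * a ^ ((3:ℝ)/2))) * (Real.sqrt (π / A) * ((2*a) * L))
      = ((s / (4 * Real.sqrt π * a ^ ((3:ℝ)/2))) * (Real.sqrt (π / A) * (2*a))) * L from by ring,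
    hone, one_mul]
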